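/- The ring Z[x_1,x_2]/⟨x_1^2, x_1^2 + x_1x_2 + x_2^2⟩ (equivalently Z[x_1,x_2]/⟨x_1^2, x_1x_2 + x_2^2⟩) admits no nontrivial tensor decomposition over Z: it cannot be written as T ⊗_Z T' with T, T' standard graded Z-algebras both different from Z. -/

import Mathlib

open MvPolynomial Finset

/-- The set of the first `j` variables among `x_0, ..., x_{n-1}`. -/
def fv (n j : ℕ) : Finset (Fin n) := Finset.univ.filter (fun i => (i : ℕ) < j)

/-- Complete homogeneous symmetric polynomial of degree `m` in the variables indexed by `S`. -/
noncomputable def hh (R : Type*) [CommRing R] (n m : ℕ) (S : Finset (Fin n)) :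
    MvPolynomial (Fin n) R :=
  ∑ s ∈ S.sym m, ((s : Multiset (Fin n)).map (X : Fin n → MvPolynomial (Fin n) R)).prod

/-- Elementary symmetric polynomial of degree `m` in the variables indexed by `S`. -/
noncomputable def ee (R : Type*) [CommRing R] (n m : ℕ) (S : Finset (Fin n)) :
    MvPolynomial (Fin n) R :=
  ∑ s ∈ S.powersetCard m, ∏ i ∈ s, X i

open scoped TensorProduct DirectSum

theorem aux_tmul_eq_zero {M N : Type*} [AddCommGroup M] [AddCommGroup N]
    [Module.Free ℤ M] [Module.Free ℤ N]
    {a : M} {b : N} (h : a ⊗ₜ[ℤ] b = 0) : a = 0 ∨ b = 0 := by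
  by_cases hb : b = 0
  · exact Or.inr hb
  · left
    obtain ⟨ι, B⟩ := Module.Free.exists_basis (R := ℤ) (M := N)
    obtain ⟨j, hj⟩ : ∃ j, B.repr b j ≠ 0 := by
      by_contra hc; push_neg at hc
      exact hb (by simpa using congrArg (B.repr.symm) (Finsupp.ext hc : B.repr b = 0))
    set φ : N →ₗ[ℤ] ℤ := B.coord j with hφdef
    set f : M ⊗[ℤ] N →ₗ[ℤ] M :=
      TensorProduct.lift (((LinearMap.lsmul ℤ M).comp φ).flip) with hfdef
    have hf : f (a ⊗ₜ[ℤ] b) = φ b • a := by rw [hfdef]; exact TensorProduct.lift.tmul _ _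
    rw [h, map_zero] at hf
    exact (smul_eq_zero.mp hf.symm).resolve_left hj

section
variable {T : Type*} [AddCommGroup T] (𝒜 : ℕ → Submodule ℤ T) [DirectSum.Decomposition 𝒜]

noncomputable def gproj (i : ℕ) : T →ₗ[ℤ] T :=
  (𝒜 i).subtype ∘ₗ (DirectSum.component ℤ ℕ (fun j => 𝒜 j) i) ∘ₗ
    (DirectSum.decomposeLinearEquiv 𝒜).toLinearMap

theorem gproj_apply (i : ℕ) (x : T) : gproj 𝒜 i x = (DirectSum.decompose 𝒜 x i : T) := rfl

theorem gproj_mem_same {i : ℕ} {x : T} (hx : x ∈ 𝒜 i) : gproj 𝒜 i x = x := by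
  rw [gproj_apply, DirectSum.decompose_of_mem_same 𝒜 hx]

theorem gproj_mem_ne {i j : ℕ} {x : T} (hx : x ∈ 𝒜 i) (hij : i ≠ j) : gproj 𝒜 j x = 0 := by
  rw [gproj_apply, DirectSum.decompose_of_mem_ne 𝒜 hx hij]

theorem free_of_decomposition (hf : ∀ d, Module.Free ℤ (𝒜 d)) : Module.Free ℤ T := by
  haveI := hf
  exact Module.Free.of_equiv (DirectSum.decomposeLinearEquiv 𝒜).symm
end

section
variable {T T' : Type*} [CommRing T] [CommRing T']
  (𝒜 : ℕ → Submodule ℤ T) (ℬ : ℕ → Submodule ℤ T')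
  [GradedAlgebra 𝒜] [GradedAlgebra ℬ]

/-- Separation of graded components in a tensor product. -/
theorem aux_sep [Module.Free ℤ T] [Module.Free ℤ T'] [Nontrivial T] [Nontrivial T']
    (h1A : (1 : T) ∈ 𝒜 0) (h1B : (1 : T') ∈ ℬ 0)
    {a a' : T} {b b' : T'} (ha : a ∈ 𝒜 1) (ha' : a' ∈ 𝒜 1) (hb : b ∈ ℬ 1) (hb' : b' ∈ ℬ 1)
    (h : a ⊗ₜ[ℤ] (1 : T') + (1 : T) ⊗ₜ[ℤ] b = a' ⊗ₜ[ℤ] (1 : T') + (1 : T) ⊗ₜ[ℤ] b') :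
    a = a' ∧ b = b' := by
  have hne : (0 : ℕ) ≠ 1 := by norm_num
  constructor
  · have h10 := congrArg (TensorProduct.map (gproj 𝒜 1) (gproj ℬ 0)) h
    simp only [map_add, TensorProduct.map_tmul, gproj_mem_same 𝒜 ha, gproj_mem_same 𝒜 ha',
      gproj_mem_same ℬ h1B, gproj_mem_ne 𝒜 h1A hne, gproj_mem_ne ℬ hb hne.symm,
      gproj_mem_ne ℬ hb' hne.symm, TensorProduct.zero_tmul, TensorProduct.tmul_zero,
      add_zero, zero_add] at h10
    have := aux_tmul_eq_zero (M := T) (N := T') (a := a - a') (b := 1)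
      (by rw [TensorProduct.sub_tmul, h10, sub_self])
    rcases this with h' | h'
    · exact sub_eq_zero.mp h'
    · exact absurd h' one_ne_zero
  · have h01 := congrArg (TensorProduct.map (gproj 𝒜 0) (gproj ℬ 1)) h
    simp only [map_add, TensorProduct.map_tmul, gproj_mem_same ℬ hb, gproj_mem_same ℬ hb',
      gproj_mem_same 𝒜 h1A, gproj_mem_ne ℬ h1B hne, gproj_mem_ne 𝒜 ha hne.symm,
      gproj_mem_ne 𝒜 ha' hne.symm, TensorProduct.zero_tmul, TensorProduct.tmul_zero,
      add_zero, zero_add] at h01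
    have := aux_tmul_eq_zero (M := T) (N := T') (a := 1) (b := b - b')
      (by rw [TensorProduct.tmul_sub, h01, sub_self])
    rcases this with h' | h'
    · exact absurd h' one_ne_zero
    · exact sub_eq_zero.mp h'
end


set_option maxHeartbeats 1000000 in
open scoped TensorProduct in
/-- `R^{(2,3)} = ℤ[x_1,x_2]/⟨x_1², x_1² + x_1x_2 + x_2²⟩` admits no nontrivial
tensor decomposition over `ℤ`: if `T, T'` are standard graded ℤ-algebras (gradings `𝒜, ℬ`
with free graded pieces, degree-0 part `ℤ`, generated in degree 1) and `e` is a graded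
ℤ-algebra isomorphism `R^{(2,3)} ≅ T ⊗_ℤ T'` — gradedness encoded by `e` carrying the
degree-1 part `span{x_1, x_2}` onto the degree-1 part `T_1 ⊗ 1 ⊕ 1 ⊗ T'_1` — then one of
the factors is trivial (`T_1 = 0` or `T'_1 = 0`, i.e. `T = ℤ` or `T' = ℤ`). -/
theorem stmt19 (T T' : Type*) [CommRing T] [CommRing T']
    (𝒜 : ℕ → Submodule ℤ T) (ℬ : ℕ → Submodule ℤ T')
    [GradedAlgebra 𝒜] [GradedAlgebra ℬ]
    (hfA : ∀ d, Module.Free ℤ (𝒜 d)) (hfB : ∀ d, Module.Free ℤ (ℬ d))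
    (h0A : 𝒜 0 = (1 : Submodule ℤ T)) (h0B : ℬ 0 = (1 : Submodule ℤ T'))
    (hgA : Algebra.adjoin ℤ ((𝒜 1 : Submodule ℤ T) : Set T) = ⊤)
    (hgB : Algebra.adjoin ℤ ((ℬ 1 : Submodule ℤ T') : Set T') = ⊤)
    (I : Ideal (MvPolynomial (Fin 2) ℤ))
    (hI : I = Ideal.span {X 0 ^ 2, X 0 ^ 2 + X 0 * X 1 + X 1 ^ 2})
    (e : (MvPolynomial (Fin 2) ℤ ⧸ I) ≃ₐ[ℤ] T ⊗[ℤ] T')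
    (hgr : Submodule.span ℤ
        {e (Ideal.Quotient.mk I (X 0)), e (Ideal.Quotient.mk I (X 1))} =
      Submodule.map (Algebra.TensorProduct.includeLeft (R := ℤ) (A := T) (B := T')
          (S := ℤ)).toLinearMap (𝒜 1) ⊔
      Submodule.map (Algebra.TensorProduct.includeRight (R := ℤ) (A := T)
          (B := T')).toLinearMap (ℬ 1)) :
    𝒜 1 = ⊥ ∨ ℬ 1 = ⊥ := by
  rcases subsingleton_or_nontrivial T with hT | hT
  · left; rw [eq_bot_iff]; intro x _; simp [Subsingleton.elim x 0]
  rcases subsingleton_or_nontrivial T' with hT' | hT'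
  · right; rw [eq_bot_iff]; intro x _; simp [Subsingleton.elim x 0]
  haveI : Module.Free ℤ T := free_of_decomposition 𝒜 hfA
  haveI : Module.Free ℤ T' := free_of_decomposition ℬ hfB
  have h1A : (1 : T) ∈ 𝒜 0 := by
    rw [h0A, Submodule.one_eq_span]; exact Submodule.mem_span_singleton_self 1
  have h1B : (1 : T') ∈ ℬ 0 := by
    rw [h0B, Submodule.one_eq_span]; exact Submodule.mem_span_singleton_self 1
  have hne : (0 : ℕ) ≠ 1 := by norm_num
  set x0 := e (Ideal.Quotient.mk I (X 0)) with hx0def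
  set x1 := e (Ideal.Quotient.mk I (X 1)) with hx1def
  -- decompose x0 and x1
  have hdec : ∀ y ∈ Submodule.span ℤ ({x0, x1} : Set (T ⊗[ℤ] T')),
      ∃ a ∈ 𝒜 1, ∃ b ∈ ℬ 1, y = a ⊗ₜ[ℤ] (1 : T') + (1 : T) ⊗ₜ[ℤ] b := by
    intro y hy
    rw [hgr] at hy
    obtain ⟨u, hu, v, hv, huv⟩ := Submodule.mem_sup.mp hy
    obtain ⟨a, ha, rfl⟩ := hu
    obtain ⟨b, hb, rfl⟩ := hv
    exact ⟨a, ha, b, hb, by rw [← huv]; rfl⟩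
  obtain ⟨a0, ha0, b0, hb0, hd0⟩ := hdec x0 (Submodule.subset_span (by simp))
  obtain ⟨a1, ha1, b1, hb1, hd1⟩ := hdec x1 (Submodule.subset_span (by simp))
  -- the relations
  have hX0sq : X 0 ^ 2 ∈ I := by rw [hI]; exact Ideal.subset_span (by simp)
  have hX011 : X 0 * X 1 + X 1 ^ 2 ∈ I := by
    rw [hI]
    have h2 : (X 0 ^ 2 + X 0 * X 1 + X 1 ^ 2 : MvPolynomial (Fin 2) ℤ) ∈
        Ideal.span {X 0 ^ 2, X 0 ^ 2 + X 0 * X 1 + X 1 ^ 2} := Ideal.subset_span (by simp)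
    have h1 : (X 0 ^ 2 : MvPolynomial (Fin 2) ℤ) ∈
        Ideal.span {X 0 ^ 2, X 0 ^ 2 + X 0 * X 1 + X 1 ^ 2} := Ideal.subset_span (by simp)
    have := Ideal.sub_mem _ h2 h1
    convert this using 1; ring
  have r1 : x0 ^ 2 = 0 := by
    rw [hx0def, ← map_pow, ← map_pow, Ideal.Quotient.eq_zero_iff_mem.mpr hX0sq, map_zero]
  have r2 : x0 * x1 + x1 ^ 2 = 0 := by
    rw [hx0def, hx1def, ← map_mul, ← map_pow, ← map_add, ← map_mul, ← map_pow, ← map_add,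
      Ideal.Quotient.eq_zero_iff_mem.mpr hX011, map_zero]
  -- expand relation 1
  have r1' : (a0 * a0) ⊗ₜ[ℤ] (1 : T') + (a0 ⊗ₜ[ℤ] b0 + a0 ⊗ₜ[ℤ] b0)
      + (1 : T) ⊗ₜ[ℤ] (b0 * b0) = 0 := by
    have hr : (a0 ⊗ₜ[ℤ] (1 : T') + (1 : T) ⊗ₜ[ℤ] b0) ^ 2 =
        (a0 ⊗ₜ[ℤ] (1:T')) * (a0 ⊗ₜ[ℤ] (1:T'))
        + ((a0 ⊗ₜ[ℤ] (1:T')) * ((1:T) ⊗ₜ[ℤ] b0) + (a0 ⊗ₜ[ℤ] (1:T')) * ((1:T) ⊗ₜ[ℤ] b0))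
        + ((1:T) ⊗ₜ[ℤ] b0) * ((1:T) ⊗ₜ[ℤ] b0) := by ring
    rw [hd0, hr] at r1
    repeat rw [Algebra.TensorProduct.tmul_mul_tmul] at r1
    simp only [one_mul, mul_one] at r1
    exact r1
  have key1 : a0 ⊗ₜ[ℤ] b0 + a0 ⊗ₜ[ℤ] b0 = 0 := by
    have h := congrArg (TensorProduct.map (gproj 𝒜 1) (gproj ℬ 1)) r1'
    simpa only [map_add, map_zero, TensorProduct.map_tmul, gproj_mem_same 𝒜 ha0,
      gproj_mem_same ℬ hb0, gproj_mem_ne 𝒜 h1A hne, gproj_mem_ne ℬ h1B hne,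
      TensorProduct.zero_tmul, TensorProduct.tmul_zero, add_zero, zero_add] using h
  have hab0 : a0 = 0 ∨ b0 = 0 := by
    have key1' : (a0 + a0) ⊗ₜ[ℤ] b0 = 0 := by rw [TensorProduct.add_tmul]; exact key1
    rcases aux_tmul_eq_zero key1' with h | h
    · left
      have h2 : (2 : ℤ) • a0 = 0 := by rw [two_smul]; exact h
      rcases smul_eq_zero.mp h2 with h' | h'
      · exact absurd h' (by norm_num)
      · exact h'
    · exact Or.inr h
  -- expand relation 2
  have r2' : (a0 * a1) ⊗ₜ[ℤ] (1 : T') + a0 ⊗ₜ[ℤ] b1 + a1 ⊗ₜ[ℤ] b0 + (1:T) ⊗ₜ[ℤ] (b0 * b1)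
      + ((a1 * a1) ⊗ₜ[ℤ] (1 : T') + (a1 ⊗ₜ[ℤ] b1 + a1 ⊗ₜ[ℤ] b1)
        + (1 : T) ⊗ₜ[ℤ] (b1 * b1)) = 0 := by
    have hr : (a0 ⊗ₜ[ℤ] (1 : T') + (1 : T) ⊗ₜ[ℤ] b0) * (a1 ⊗ₜ[ℤ] (1 : T') + (1 : T) ⊗ₜ[ℤ] b1)
        + (a1 ⊗ₜ[ℤ] (1 : T') + (1 : T) ⊗ₜ[ℤ] b1) ^ 2 =
        (a0 ⊗ₜ[ℤ] (1:T')) * (a1 ⊗ₜ[ℤ] (1:T')) + (a0 ⊗ₜ[ℤ] (1:T')) * ((1:T) ⊗ₜ[ℤ] b1)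
        + (a1 ⊗ₜ[ℤ] (1:T')) * ((1:T) ⊗ₜ[ℤ] b0) + ((1:T) ⊗ₜ[ℤ] b0) * ((1:T) ⊗ₜ[ℤ] b1)
        + ((a1 ⊗ₜ[ℤ] (1:T')) * (a1 ⊗ₜ[ℤ] (1:T'))
          + ((a1 ⊗ₜ[ℤ] (1:T')) * ((1:T) ⊗ₜ[ℤ] b1) + (a1 ⊗ₜ[ℤ] (1:T')) * ((1:T) ⊗ₜ[ℤ] b1))
          + ((1:T) ⊗ₜ[ℤ] b1) * ((1:T) ⊗ₜ[ℤ] b1)) := by ring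
    rw [hd0, hd1, hr] at r2
    repeat rw [Algebra.TensorProduct.tmul_mul_tmul] at r2
    simp only [one_mul, mul_one] at r2
    exact r2
  have key2 : a0 ⊗ₜ[ℤ] b1 + a1 ⊗ₜ[ℤ] b0 + (a1 ⊗ₜ[ℤ] b1 + a1 ⊗ₜ[ℤ] b1) = 0 := by
    have h := congrArg (TensorProduct.map (gproj 𝒜 1) (gproj ℬ 1)) r2'
    simpa only [map_add, map_zero, TensorProduct.map_tmul, gproj_mem_same 𝒜 ha0,
      gproj_mem_same 𝒜 ha1, gproj_mem_same ℬ hb0, gproj_mem_same ℬ hb1,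
      gproj_mem_ne 𝒜 h1A hne, gproj_mem_ne ℬ h1B hne,
      TensorProduct.zero_tmul, TensorProduct.tmul_zero, add_zero, zero_add] using h
  -- membership in the span gives coefficients
  have memL : ∀ y ∈ Submodule.span ℤ ({x0, x1} : Set (T ⊗[ℤ] T')),
      ∃ m n : ℤ, y = (m • a0 + n • a1) ⊗ₜ[ℤ] (1 : T') + (1 : T) ⊗ₜ[ℤ] (m • b0 + n • b1) := by
    intro y hy
    obtain ⟨m, n, hmn⟩ := Submodule.mem_span_pair.mp hy
    refine ⟨m, n, ?_⟩
    rw [← hmn, hd0, hd1]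
    simp only [smul_add, TensorProduct.smul_tmul', TensorProduct.tmul_smul,
      TensorProduct.add_tmul, TensorProduct.tmul_add]
    abel
  have hA1mem : ∀ a ∈ 𝒜 1, a ⊗ₜ[ℤ] (1 : T') ∈ Submodule.span ℤ ({x0, x1} : Set (T ⊗[ℤ] T')) := by
    intro a ha
    rw [hgr]
    exact Submodule.mem_sup_left (Submodule.mem_map_of_mem ha)
  have hB1mem : ∀ b ∈ ℬ 1, (1 : T) ⊗ₜ[ℤ] b ∈ Submodule.span ℤ ({x0, x1} : Set (T ⊗[ℤ] T')) := by
    intro b hb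
    rw [hgr]
    exact Submodule.mem_sup_right (Submodule.mem_map_of_mem hb)
  have combA : ∀ m n : ℤ, m • a0 + n • a1 ∈ 𝒜 1 := fun m n =>
    Submodule.add_mem _ (Submodule.smul_mem _ _ ha0) (Submodule.smul_mem _ _ ha1)
  have combB : ∀ m n : ℤ, m • b0 + n • b1 ∈ ℬ 1 := fun m n =>
    Submodule.add_mem _ (Submodule.smul_mem _ _ hb0) (Submodule.smul_mem _ _ hb1)
  -- every element of 𝒜 1 (resp. ℬ 1) is a combination of a0, a1 (resp. b0, b1)
  have hA1span : ∀ a ∈ 𝒜 1, ∃ m n : ℤ, a = m • a0 + n • a1 := by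
    intro a ha
    obtain ⟨m, n, hmn⟩ := memL _ (hA1mem a ha)
    have : a ⊗ₜ[ℤ] (1 : T') + (1 : T) ⊗ₜ[ℤ] (0 : T') =
        (m • a0 + n • a1) ⊗ₜ[ℤ] (1 : T') + (1 : T) ⊗ₜ[ℤ] (m • b0 + n • b1) := by
      rw [TensorProduct.tmul_zero, add_zero]; exact hmn
    exact ⟨m, n, (aux_sep 𝒜 ℬ h1A h1B ha (combA m n) (Submodule.zero_mem _) (combB m n) this).1⟩
  have hB1span : ∀ b ∈ ℬ 1, ∃ m n : ℤ, b = m • b0 + n • b1 := by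
    intro b hb
    obtain ⟨m, n, hmn⟩ := memL _ (hB1mem b hb)
    have : (0 : T) ⊗ₜ[ℤ] (1 : T') + (1 : T) ⊗ₜ[ℤ] b =
        (m • a0 + n • a1) ⊗ₜ[ℤ] (1 : T') + (1 : T) ⊗ₜ[ℤ] (m • b0 + n • b1) := by
      rw [TensorProduct.zero_tmul, zero_add]; exact hmn
    exact ⟨m, n, (aux_sep 𝒜 ℬ h1A h1B (Submodule.zero_mem _) (combA m n) hb (combB m n) this).2⟩
  -- conclusions
  have concA : a0 = 0 → a1 = 0 → 𝒜 1 = ⊥ := by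
    intro h0 h1
    rw [eq_bot_iff]; intro a ha
    obtain ⟨m, n, hmn⟩ := hA1span a ha
    simp [hmn, h0, h1]
  have concB : b0 = 0 → b1 = 0 → ℬ 1 = ⊥ := by
    intro h0 h1
    rw [eq_bot_iff]; intro b hb
    obtain ⟨m, n, hmn⟩ := hB1span b hb
    simp [hmn, h0, h1]
  -- main case analysis
  rcases hab0 with ha00 | hb00
  · -- a0 = 0
    rw [ha00, TensorProduct.zero_tmul, zero_add] at key2
    have key2' : a1 ⊗ₜ[ℤ] (b0 + (b1 + b1)) = 0 := by
      rw [TensorProduct.tmul_add, TensorProduct.tmul_add]; exact key2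
    rcases aux_tmul_eq_zero key2' with h | h
    · -- a1 = 0
      exact Or.inl (concA ha00 h)
    · -- b0 = -(b1 + b1)
      have hb0eq : b0 = -(b1 + b1) := eq_neg_of_add_eq_zero_left h
      by_cases ha10 : a1 = 0
      · exact Or.inl (concA ha00 ha10)
      obtain ⟨m, n, hmn⟩ := memL _ (hB1mem b1 hb1)
      have hsep := aux_sep 𝒜 ℬ h1A h1B (Submodule.zero_mem _) (combA m n) hb1 (combB m n)
        (by rw [TensorProduct.zero_tmul, zero_add]; exact hmn)
      have hn : n = 0 := by
        have : (0 : T) = n • a1 := by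
          rw [hsep.1, ha00, smul_zero, zero_add]
        rcases smul_eq_zero.mp this.symm with h' | h'
        · exact h'
        · exact absurd h' ha10
      have hb1z : b1 = 0 := by
        have heq : b1 = m • b0 + n • b1 := hsep.2
        rw [hn, zero_smul, add_zero, hb0eq] at heq
        rw [smul_neg, smul_add] at heq
        have h3 : b1 + (m • b1 + m • b1) = 0 := eq_neg_iff_add_eq_zero.mp heq
        have h4 : (1 + 2 * m) • b1 = 0 := by
          have h5 : ((1 + 2 * m) : ℤ) • b1 = b1 + (m • b1 + m • b1) := by
            rw [add_smul, one_smul, two_mul, add_smul]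
          rw [h5]; exact h3
        rcases smul_eq_zero.mp h4 with h' | h'
        · exact absurd h' (by omega)
        · exact h'
      refine Or.inr (concB ?_ hb1z)
      rw [hb0eq, hb1z]; simp
  · -- b0 = 0
    rw [hb00, TensorProduct.tmul_zero, add_zero] at key2
    have key2' : (a0 + (a1 + a1)) ⊗ₜ[ℤ] b1 = 0 := by
      rw [TensorProduct.add_tmul, TensorProduct.add_tmul]; exact key2
    rcases aux_tmul_eq_zero key2' with h | h
    · -- a0 = -(a1 + a1)
      have ha0eq : a0 = -(a1 + a1) := eq_neg_of_add_eq_zero_left h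
      by_cases hb10 : b1 = 0
      · exact Or.inr (concB hb00 hb10)
      obtain ⟨m, n, hmn⟩ := memL _ (hA1mem a1 ha1)
      have hsep := aux_sep 𝒜 ℬ h1A h1B ha1 (combA m n) (Submodule.zero_mem _) (combB m n)
        (by rw [TensorProduct.tmul_zero, add_zero]; exact hmn)
      have hn : n = 0 := by
        have : (0 : T') = n • b1 := by
          rw [hsep.2, hb00, smul_zero, zero_add]
        rcases smul_eq_zero.mp this.symm with h' | h'
        · exact h'
        · exact absurd h' hb10
      have ha1z : a1 = 0 := by
        have heq : a1 = m • a0 + n • a1 := hsep.1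
        rw [hn, zero_smul, add_zero, ha0eq] at heq
        rw [smul_neg, smul_add] at heq
        have h3 : a1 + (m • a1 + m • a1) = 0 := eq_neg_iff_add_eq_zero.mp heq
        have h4 : (1 + 2 * m) • a1 = 0 := by
          have h5 : ((1 + 2 * m) : ℤ) • a1 = a1 + (m • a1 + m • a1) := by
            rw [add_smul, one_smul, two_mul, add_smul]
          rw [h5]; exact h3
        rcases smul_eq_zero.mp h4 with h' | h'
        · exact absurd h' (by omega)
        · exact h'
      refine Or.inl (concA ?_ ha1z)
      rw [ha0eq, ha1z]; simp
    · exact Or.inr (concB hb00 h)
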